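/- For every λ-set S there is a sub-λ-set S¹ ≤ S such that all final elements of S¹ have the same length n. -/

import Mathlib

open Set

namespace Sh521

/-- Finite sequences of ordinals. -/
abbrev Seq := List Ordinal

/-- `W(η,S) = { i : η⌢⟨i⟩ ∈ S }`. -/
def Wset (S : Set Seq) (η : Seq) : Set Ordinal := {i | η ++ [i] ∈ S}

/-- `λ(η,S) = sup W(η,S)`. -/
noncomputable def lamOf (S : Set Seq) (η : Seq) : Ordinal := sSup (Wset S η)

/-- An ordinal which is a regular uncountable cardinal. -/
def IsRegUncountable (o : Ordinal) : Prop :=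
  ∃ κ : Cardinal, κ.IsRegular ∧ Cardinal.aleph0 < κ ∧ o = κ.ord

/-- `C` is unbounded below `κ`. -/
def UnboundedBelow (C : Set Ordinal) (κ : Ordinal) : Prop :=
  ∀ α < κ, ∃ β ∈ C, α ≤ β ∧ β < κ

/-- `C` is closed below `κ`: any limit ordinal `< κ` which is approached by members
of `C` belongs to `C`. -/
def ClosedBelow (C : Set Ordinal) (κ : Ordinal) : Prop :=
  ∀ δ < κ, Order.IsSuccLimit δ → (∀ β < δ, ∃ γ ∈ C, β ≤ γ ∧ γ < δ) → δ ∈ C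

/-- `C` is a stationary subset of `κ`: it meets every club of `κ`. -/
def StationaryBelow (C : Set Ordinal) (κ : Ordinal) : Prop :=
  ∀ D : Set Ordinal, ClosedBelow D κ → UnboundedBelow D κ → (C ∩ D).Nonempty

/-- Definition 3.1: `S` is a `λ`-set: a nonempty set of strictly decreasing finite
sequences of ordinals `< λ`, closed under initial segments, such that whenever
`W(η,S) ≠ ∅`, `λ(η,S)` is a regular uncountable cardinal and `W(η,S)` is stationary
in it; and `λ(⟨⟩,S) = λ`. -/
def IsLambdaSet (lam : Ordinal) (S : Set Seq) : Prop :=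
  S.Nonempty ∧
  (∀ η ∈ S, List.Chain' (fun a b => a > b) η) ∧
  (∀ η ∈ S, ∀ i ∈ η, i < lam) ∧
  (∀ η ∈ S, ∀ ν : Seq, ν <+: η → ν ∈ S) ∧
  (∀ η ∈ S, (Wset S η).Nonempty →
    IsRegUncountable (lamOf S η) ∧ StationaryBelow (Wset S η) (lamOf S η)) ∧
  lamOf S [] = lam

/-- The final elements of `S`. -/
def Sf (S : Set Seq) : Set Seq := {η | η ∈ S ∧ Wset S η = ∅}

/-- The initial elements of `S`. -/
def Si (S : Set Seq) : Set Seq := S \ Sf S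

/-- `S¹ ≤ S²` : `S¹` is a sub-`λ`-set of `S²`. -/
def SubLambdaSet (S1 S2 : Set Seq) : Prop :=
  S1 ⊆ S2 ∧ ∀ η ∈ S1, lamOf S1 η = lamOf S2 η

end Sh521

namespace Sh521

open scoped Classical

/-! ### Auxiliary lemmas about stationary sets -/

lemma stationaryBelow_nonempty {C : Set Ordinal} {κ : Ordinal}
    (h : StationaryBelow C κ) : C.Nonempty := by
  have := h univ (fun δ _ _ _ => mem_univ δ) (fun α hα => ⟨α, mem_univ α, le_refl α, hα⟩)
  simpa using this

lemma stationaryBelow_mono {C C' : Set Ordinal} {κ : Ordinal} (hsub : C ⊆ C')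
    (h : StationaryBelow C κ) : StationaryBelow C' κ := fun D hc hu =>
  (h D hc hu).mono (inter_subset_inter_left D hsub)

lemma unbounded_of_stationary {C : Set Ordinal} {κ : Ordinal} (hκ : Order.IsSuccLimit κ)
    (h : StationaryBelow C κ) : UnboundedBelow C κ := by
  intro α hα
  have hc : ClosedBelow {β | α ≤ β ∧ β < κ} κ := by
    intro δ hδ hlim happ
    obtain ⟨γ, hγ, -, hγδ⟩ := happ 0 hlim.pos
    exact ⟨le_of_lt (lt_of_le_of_lt hγ.1 hγδ), hδ⟩
  have hu : UnboundedBelow {β | α ≤ β ∧ β < κ} κ := by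
    intro α' hα'
    exact ⟨max α α', ⟨le_max_left _ _, max_lt hα hα'⟩, le_max_right _ _, max_lt hα hα'⟩
  obtain ⟨β, hβC, hβD⟩ := h _ hc hu
  exact ⟨β, hβC, hβD.1, hβD.2⟩

lemma sSup_eq_of_stationary {C W : Set Ordinal} (hsub : C ⊆ W) (hbW : BddAbove W)
    (hlim : Order.IsSuccLimit (sSup W)) (hst : StationaryBelow C (sSup W)) : sSup C = sSup W := by
  refine le_antisymm (csSup_le_csSup hbW (stationaryBelow_nonempty hst) hsub) ?_
  by_contra hlt
  have hlt' : sSup C < sSup W := lt_of_not_ge hlt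
  obtain ⟨β, hβC, hβ1, hβ2⟩ :=
    unbounded_of_stationary hlim hst (Order.succ (sSup C)) (hlim.succ_lt hlt')
  have : β ≤ sSup C := le_csSup (hbW.mono hsub) hβC
  exact absurd (lt_of_lt_of_le (Order.lt_succ _) (le_trans hβ1 this)) (lt_irrefl _)

lemma isLimit_of_regUncountable {κ : Ordinal} (h : IsRegUncountable κ) : Order.IsSuccLimit κ := by
  obtain ⟨c, hreg, -, rfl⟩ := h
  exact Cardinal.isSuccLimit_ord hreg.aleph0_le

/-- The intersection of countably many clubs below a regular uncountable `κ` is a club. -/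
lemma iInter_club {κ : Ordinal} (hreg : IsRegUncountable κ) (D : ℕ → Set Ordinal)
    (hc : ∀ m, ClosedBelow (D m) κ) (hu : ∀ m, UnboundedBelow (D m) κ) :
    ClosedBelow (⋂ m, D m) κ ∧ UnboundedBelow (⋂ m, D m) κ := by
  have hlim : Order.IsSuccLimit κ := isLimit_of_regUncountable hreg
  constructor
  · intro δ hδ hδlim happ
    refine mem_iInter.2 fun m => hc m δ hδ hδlim fun β hβ => ?_
    obtain ⟨γ, hγ, h1, h2⟩ := happ β hβ
    exact ⟨γ, mem_iInter.1 hγ m, h1, h2⟩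
  · intro α hα
    -- choice function into each club
    set E : ℕ → Ordinal → Ordinal := fun m γ => sInf {β | β ∈ D m ∧ γ ≤ β ∧ β < κ} with hE
    have hEmem : ∀ m γ, γ < κ → E m γ ∈ D m ∧ γ ≤ E m γ ∧ E m γ < κ := by
      intro m γ hγ
      have hne : {β | β ∈ D m ∧ γ ≤ β ∧ β < κ}.Nonempty := by
        obtain ⟨β, hβ, h1, h2⟩ := hu m γ hγ
        exact ⟨β, hβ, h1, h2⟩
      exact csInf_mem hne
    set x : ℕ → Ordinal :=
      fun k => Nat.rec α (fun k xk => (Finset.range (k + 1)).sup (fun m => E m xk) + 1) k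
      with hx
    have hx0 : x 0 = α := rfl
    have hxsucc : ∀ k, x (k + 1) = (Finset.range (k + 1)).sup (fun m => E m (x k)) + 1 :=
      fun k => rfl
    have hxκ : ∀ k, x k < κ := by
      intro k
      induction k with
      | zero => exact hα
      | succ k ih =>
        rw [hxsucc]
        have hsup : (Finset.range (k + 1)).sup (fun m => E m (x k)) < κ := by
          refine Finset.sup_lt_iff (by simpa using hlim.pos) |>.2 fun m _ => (hEmem m (x k) ih).2.2
        have := hlim.succ_lt hsup
        rwa [← Ordinal.add_one_eq_succ] at this
    have hxlt : ∀ k, x k < x (k + 1) := by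
      intro k
      rw [hxsucc]
      have h1 : x k ≤ E 0 (x k) := (hEmem 0 (x k) (hxκ k)).2.1
      have h2 : E 0 (x k) ≤ (Finset.range (k + 1)).sup (fun m => E m (x k)) :=
        Finset.le_sup (f := fun m => E m (x k)) (Finset.mem_range.2 (Nat.succ_pos k))
      exact lt_of_le_of_lt (le_trans h1 h2) (lt_add_one _)
    have hxmono : StrictMono x := strictMono_nat_of_lt_succ hxlt
    set δ : Ordinal := ⨆ k, x k with hδdef
    have hδκ : δ < κ := by
      obtain ⟨c, hcreg, hcω, hord⟩ := hreg
      have hcof : κ.cof = c := by rw [hord]; exact hcreg.cof_eq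
      refine Ordinal.iSup_lt_ord_lift ?_ hxκ
      rw [hcof]
      simpa using hcω
    have hxle : ∀ k, x k ≤ δ := fun k => Ordinal.le_iSup x k
    have hδlim : Order.IsSuccLimit δ := by
      refine Ordinal.isSuccLimit_iff.2 ⟨?_, Order.isSuccPrelimit_of_succ_lt ?_⟩
      · intro h0
        have := hxle 1
        rw [h0] at this
        have := lt_of_lt_of_le (hxlt 0) this
        exact absurd this (by simp) 
      · intro β hβ
        rw [hδdef] at hβ
        obtain ⟨k, hk⟩ := Ordinal.lt_iSup_iff.1 hβ
        have : Order.succ β ≤ x k := Order.succ_le_of_lt hk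
        exact lt_of_le_of_lt this (lt_of_lt_of_le (hxlt k) (hxle (k + 1)))
    have hδD : ∀ m, δ ∈ D m := by
      intro m
      refine hc m δ hδκ hδlim fun β hβ => ?_
      rw [hδdef] at hβ
      obtain ⟨k, hk⟩ := Ordinal.lt_iSup_iff.1 hβ
      set j := max k m with hj
      refine ⟨E m (x j), (hEmem m (x j) (hxκ j)).1, ?_, ?_⟩
      · exact le_trans (le_of_lt hk) (le_trans (hxmono.monotone (le_max_left _ _))
          (hEmem m (x j) (hxκ j)).2.1)
      · have hmj : m ∈ Finset.range (j + 1) := by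
          refine Finset.mem_range.2 ?_
          rw [hj]
          exact Nat.lt_succ_of_le (le_max_right _ _)
        have h2 : E m (x j) ≤ (Finset.range (j + 1)).sup (fun m => E m (x j)) :=
          Finset.le_sup (f := fun m => E m (x j)) hmj
        have h3 : E m (x j) < x (j + 1) := by
          rw [hxsucc]; exact lt_of_le_of_lt h2 (lt_add_one _)
        calc E m (x j) < x (j + 1) := h3
          _ ≤ δ := hxle (j + 1)
    exact ⟨δ, mem_iInter.2 hδD, le_trans (hx0 ▸ hxle 0 : α ≤ δ) (le_refl δ), hδκ⟩

/-- A stationary set below a regular uncountable cardinal cannot be partitioned into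
countably many nonstationary pieces. -/
lemma stationary_partition {C : Set Ordinal} {κ : Ordinal} (hreg : IsRegUncountable κ)
    (g : Ordinal → ℕ) (h : StationaryBelow C κ) :
    ∃ m, StationaryBelow {i | i ∈ C ∧ g i = m} κ := by
  by_contra hcon
  push_neg at hcon
  have hex : ∀ m : ℕ, ∃ D, ClosedBelow D κ ∧ UnboundedBelow D κ ∧
      ({i | i ∈ C ∧ g i = m} ∩ D) = ∅ := by
    intro m
    have := hcon m
    unfold StationaryBelow at this
    push_neg at this
    obtain ⟨D, hc, hu, hdisj⟩ := this
    exact ⟨D, hc, hu, hdisj⟩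
  choose D hDc hDu hDdisj using hex
  obtain ⟨hclosed, hunb⟩ := iInter_club hreg D hDc hDu
  obtain ⟨i, hiC, hiD⟩ := h _ hclosed hunb
  have : i ∈ {j | j ∈ C ∧ g j = g i} ∩ D (g i) := ⟨⟨hiC, rfl⟩, mem_iInter.1 hiD (g i)⟩
  rw [hDdisj] at this
  exact this

/-! ### The rank function -/

/-- Extension by one element, restricted to strictly decreasing sequences. -/
def extRel (a b : Seq) : Prop := (∃ i, a = b ++ [i]) ∧ List.Chain' (fun a b => a > b) a

/-- Measure witnessing well-foundedness of `extRel`. -/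
noncomputable def meas : Seq → WithTop Ordinal := fun η =>
  match η.getLast? with
  | none => ⊤
  | some o => (o : WithTop Ordinal)

lemma extRel_wf : WellFounded extRel := by
  have hsub : Subrelation extRel (InvImage (· < ·) meas) := by
    rintro a b ⟨⟨i, rfl⟩, hch⟩
    have h1 : meas (b ++ [i]) = (i : WithTop Ordinal) := by
      simp [meas, List.getLast?_concat]
    show meas (b ++ [i]) < meas b
    cases hb : b.getLast? with
    | none =>
      rw [h1]
      simp only [meas, hb]
      exact WithTop.coe_lt_top i
    | some j =>
      have hji : j > i := by
        have hch : List.IsChain (fun a b : Ordinal => a > b) (b ++ [i]) := hch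
        rw [List.isChain_append] at hch
        exact hch.2.2 j hb i rfl
      rw [h1]
      simp only [meas, hb]
      exact_mod_cast hji
  exact Subrelation.wf hsub (InvImage.wf meas wellFounded_lt)

/-- The rank of a node: one more than the least value attained stationarily often
among ranks of extensions, or `0` if no value is attained stationarily often. -/
noncomputable def nrank (S : Set Seq) : Seq → ℕ :=
  extRel_wf.fix fun η rec =>
    if h : ∃ m : ℕ, StationaryBelow
        {i | i ∈ Wset S η ∧ ∃ hr : extRel (η ++ [i]) η, rec (η ++ [i]) hr = m}
        (lamOf S η)
    then Nat.find h + 1 else 0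

lemma nrank_eq (S : Set Seq) (η : Seq) :
    nrank S η = if h : ∃ m : ℕ, StationaryBelow
        {i | i ∈ Wset S η ∧ ∃ _ : extRel (η ++ [i]) η, nrank S (η ++ [i]) = m}
        (lamOf S η)
    then Nat.find h + 1 else 0 := by
  conv_lhs => rw [nrank, WellFounded.fix_eq]
  rfl

lemma nrank_eq' {lam : Ordinal} {S : Set Seq} (hS : IsLambdaSet lam S) {η : Seq} (hη : η ∈ S) :
    nrank S η = if h : ∃ m : ℕ, StationaryBelow
        {i | i ∈ Wset S η ∧ nrank S (η ++ [i]) = m} (lamOf S η)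
    then Nat.find h + 1 else 0 := by
  rw [nrank_eq]
  have hset : ∀ m : ℕ, {i | i ∈ Wset S η ∧ ∃ _ : extRel (η ++ [i]) η, nrank S (η ++ [i]) = m}
      = {i | i ∈ Wset S η ∧ nrank S (η ++ [i]) = m} := by
    intro m
    ext i
    simp only [mem_setOf_eq, and_congr_right_iff]
    intro hi
    have hr : extRel (η ++ [i]) η := ⟨⟨i, rfl⟩, hS.2.1 _ hi⟩
    exact ⟨fun ⟨_, h⟩ => h, fun h => ⟨hr, h⟩⟩
  simp only [hset]

/-- Main structural fact: at a non-final node of `S`, the rank is positive and the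
set of successors whose rank is exactly one less is stationary. -/
lemma nrank_pos_stationary {lam : Ordinal} {S : Set Seq} (hS : IsLambdaSet lam S)
    {η : Seq} (hη : η ∈ S) (hne : (Wset S η).Nonempty) :
    0 < nrank S η ∧
      StationaryBelow {i | i ∈ Wset S η ∧ nrank S (η ++ [i]) + 1 = nrank S η} (lamOf S η) := by
  obtain ⟨hreg, hst⟩ := hS.2.2.2.2.1 η hη hne
  obtain ⟨m, hm⟩ := stationary_partition hreg (fun i => nrank S (η ++ [i])) hst
  have hcond : ∃ m : ℕ, StationaryBelow
      {i | i ∈ Wset S η ∧ nrank S (η ++ [i]) = m} (lamOf S η) := ⟨m, hm⟩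
  have heq : nrank S η = Nat.find hcond + 1 := by
    rw [nrank_eq' hS hη, dif_pos hcond]
  refine ⟨by omega, ?_⟩
  have := Nat.find_spec hcond
  refine stationaryBelow_mono ?_ this
  intro i hi
  exact ⟨hi.1, by rw [hi.2, heq]⟩

/-! ### The subtree -/

/-- Membership in the uniformized subtree. -/
inductive memS1 (S : Set Seq) : Seq → Prop
  | nil : memS1 S []
  | cons {η : Seq} {i : Ordinal} : memS1 S η → (η ++ [i]) ∈ S →
      nrank S (η ++ [i]) + 1 = nrank S η → memS1 S (η ++ [i])

lemma memS1_inv {S : Set Seq} {ρ : Seq} (h : memS1 S ρ) :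
    ∀ η i, ρ = η ++ [i] → memS1 S η ∧ (η ++ [i]) ∈ S ∧ nrank S (η ++ [i]) + 1 = nrank S η := by
  induction h with
  | nil => intro η i heq; simp at heq
  | cons h1 h2 h3 _ =>
    intro η i heq
    obtain ⟨rfl, hi⟩ := List.append_inj' heq rfl
    have : _ = i := List.head_eq_of_cons_eq hi
    subst this
    exact ⟨h1, h2, h3⟩

lemma memS1_concat_iff {S : Set Seq} {η : Seq} {i : Ordinal} :
    memS1 S (η ++ [i]) ↔
      memS1 S η ∧ (η ++ [i]) ∈ S ∧ nrank S (η ++ [i]) + 1 = nrank S η := by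
  refine ⟨fun h => memS1_inv h η i rfl, fun ⟨h1, h2, h3⟩ => memS1.cons h1 h2 h3⟩

lemma memS1_mem_length {lam : Ordinal} {S : Set Seq} (hS : IsLambdaSet lam S)
    {η : Seq} (h : memS1 S η) :
    η ∈ S ∧ nrank S η + η.length = nrank S [] := by
  induction h with
  | nil =>
    obtain ⟨ρ, hρ⟩ := hS.1
    exact ⟨hS.2.2.2.1 ρ hρ [] (List.nil_prefix), by simp⟩
  | cons h1 h2 h3 ih =>
    refine ⟨h2, ?_⟩
    rw [List.length_append]
    simp only [List.length_singleton]
    omega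

section Main

variable {lam : Ordinal} {S : Set Seq} (hS : IsLambdaSet lam S)

lemma wset_memS1 {η : Seq} (hη : memS1 S η) :
    Wset {ρ | memS1 S ρ} η = {i | i ∈ Wset S η ∧ nrank S (η ++ [i]) + 1 = nrank S η} := by
  ext i
  simp only [Wset, mem_setOf_eq]
  rw [memS1_concat_iff]
  exact ⟨fun ⟨_, h2, h3⟩ => ⟨h2, h3⟩, fun ⟨h2, h3⟩ => ⟨hη, h2, h3⟩⟩

include hS in
lemma bddAbove_wset (η : Seq) : BddAbove (Wset S η) := by
  refine ⟨lam, fun i hi => ?_⟩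
  exact le_of_lt (hS.2.2.1 (η ++ [i]) hi i (by simp))

include hS in
/-- If a node of the subtree has a successor in the subtree, the sups agree and the
subtree's successor set is stationary. -/
lemma key {η : Seq} (hη : memS1 S η) (hne : (Wset {ρ | memS1 S ρ} η).Nonempty) :
    lamOf {ρ | memS1 S ρ} η = lamOf S η ∧
      StationaryBelow (Wset {ρ | memS1 S ρ} η) (lamOf S η) := by
  have hηS : η ∈ S := (memS1_mem_length hS hη).1
  have hW : Wset {ρ | memS1 S ρ} η ⊆ Wset S η := by
    rw [wset_memS1 hη]; exact fun i hi => hi.1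
  have hneS : (Wset S η).Nonempty := hne.mono hW
  obtain ⟨hpos, hst⟩ := nrank_pos_stationary hS hηS hneS
  have hWeq : Wset {ρ | memS1 S ρ} η = {i | i ∈ Wset S η ∧ nrank S (η ++ [i]) + 1 = nrank S η} :=
    wset_memS1 hη
  have hst1 : StationaryBelow (Wset {ρ | memS1 S ρ} η) (lamOf S η) := by rw [hWeq]; exact hst
  have hreg := (hS.2.2.2.2.1 η hηS hneS).1
  have hlim : Order.IsSuccLimit (lamOf S η) := isLimit_of_regUncountable hreg
  refine ⟨?_, hst1⟩
  exact sSup_eq_of_stationary hW (bddAbove_wset hS η) hlim hst1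

include hS in
/-- If a subtree node has no successors in the subtree, it has none in `S`. -/
lemma final_final {η : Seq} (hη : memS1 S η) (hempty : Wset {ρ | memS1 S ρ} η = ∅) :
    Wset S η = ∅ := by
  by_contra hne
  have hηS : η ∈ S := (memS1_mem_length hS hη).1
  obtain ⟨hpos, hst⟩ := nrank_pos_stationary hS hηS (nonempty_iff_ne_empty.2 hne)
  obtain ⟨i, hi⟩ := stationaryBelow_nonempty hst
  have : i ∈ Wset {ρ | memS1 S ρ} η := by rw [wset_memS1 hη]; exact hi
  rw [hempty] at this
  exact this

end Main

/-- Claim 3.2(6)(a). Every `λ`-set has a sub-`λ`-set all of whose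
final elements have the same length `n`. -/
theorem uniform_length_sub_lambdaSet (lam : Ordinal) (S : Set Seq)
    (hS : IsLambdaSet lam S) :
    ∃ S1 : Set Seq, IsLambdaSet lam S1 ∧ SubLambdaSet S1 S ∧
      ∃ n : ℕ, ∀ η ∈ Sf S1, η.length = n := by
  refine ⟨{ρ | memS1 S ρ}, ?_, ?_, nrank S [], ?_⟩
  · -- IsLambdaSet
    have hsub : {ρ | memS1 S ρ} ⊆ S := fun η h => (memS1_mem_length hS h).1
    refine ⟨⟨[], memS1.nil⟩, fun η h => hS.2.1 η (hsub h), fun η h => hS.2.2.1 η (hsub h),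
      ?_, ?_, ?_⟩
    · -- prefix closed
      intro η hη ν hν
      induction hη with
      | nil =>
        rw [List.prefix_nil] at hν
        subst hν; exact memS1.nil
      | cons h1 h2 h3 ih =>
        rcases List.prefix_concat_iff.1 hν with rfl | hν'
        · exact memS1.cons h1 h2 h3
        · exact ih hν'
    · -- stationarity
      intro η hη hne
      obtain ⟨heq, hst⟩ := key hS hη hne
      rw [heq]
      have hηS : η ∈ S := (memS1_mem_length hS hη).1
      have hW : Wset {ρ | memS1 S ρ} η ⊆ Wset S η := by
        rw [wset_memS1 hη]; exact fun i hi => hi.1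
      exact ⟨(hS.2.2.2.2.1 η hηS (hne.mono hW)).1, hst⟩
    · -- lamOf at []
      rcases eq_empty_or_nonempty (Wset {ρ | memS1 S ρ} []) with hemp | hne
      · have := final_final hS memS1.nil hemp
        have hlam : lamOf S [] = lam := hS.2.2.2.2.2
        rw [← hlam]
        unfold lamOf
        rw [hemp, this]
      · rw [(key hS memS1.nil hne).1]
        exact hS.2.2.2.2.2
  · -- SubLambdaSet
    refine ⟨fun η h => (memS1_mem_length hS h).1, ?_⟩
    intro η hη
    rcases eq_empty_or_nonempty (Wset {ρ | memS1 S ρ} η) with hemp | hne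
    · have := final_final hS hη hemp
      unfold lamOf
      rw [hemp, this]
    · exact (key hS hη hne).1
  · -- uniform length
    rintro η ⟨hη, hemp⟩
    have hη1 : memS1 S η := hη
    have hWS : Wset S η = ∅ := final_final hS hη1 hemp
    have hlen := (memS1_mem_length hS hη1).2
    have hηS : η ∈ S := (memS1_mem_length hS hη1).1
    have h0 : nrank S η = 0 := by
      rw [nrank_eq' hS hηS]
      rw [dif_neg]
      rintro ⟨m, hm⟩
      obtain ⟨i, hi, -⟩ := stationaryBelow_nonempty hm
      rw [hWS] at hi
      exact hi
    omega

end Sh521
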